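/- Let n ≥ 3, 1 ≤ z ≤ ⌊(n-1)/2⌋, and consider the sorted profile x in which z agents are at 0, ⌈(n-2z)/2⌉ agents are at 1/2, and ⌊n/2⌋ agents are at 1. Then the utilitarian social cost with z outliers of placing the facility at 1/2 divided by the optimal utilitarian social cost with z outliers equals ⌊n/2⌋ / ⌈(n-2z)/2⌉, which equals n/(n-2z) for n even and (n-1)/(n-2z+1) for n odd. -/

import Mathlib

/-- Utilitarian social cost with `z` outliers of placing the facility at `y`:
minimum over sets `S` of `n - z` non-outliers of the total distance. -/
noncomputable def OPTsc (n z : ℕ) (x : Fin n → ℝ) (y : ℝ) : ℝ :=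
  sInf {c : ℝ | ∃ S : Finset (Fin n), S.card = n - z ∧ c = ∑ i ∈ S, |y - x i|}

/-- Optimal utilitarian social cost with `z` outliers. -/
noncomputable def OPTscStar (n z : ℕ) (x : Fin n → ℝ) : ℝ :=
  sInf (Set.range (OPTsc n z x))

lemma key_lb (a b c m y : ℝ) (ha : 0 ≤ a) (hb : 0 ≤ b) (hc : 0 ≤ c)
    (h1 : m ≤ b + c) (h2 : m ≤ a + c) (h3 : m ≤ a + b) :
    m / 2 ≤ a * |y - 0| + b * |y - 1/2| + c * |y - 1| := by
  rcases le_total y 0 with h | h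
  · rw [abs_of_nonpos (by linarith), abs_of_nonpos (by linarith), abs_of_nonpos (by linarith)]
    nlinarith [mul_nonneg ha (neg_nonneg.2 h), mul_nonneg hb (neg_nonneg.2 h),
      mul_nonneg hc (neg_nonneg.2 h)]
  rcases le_total y (1/2) with h' | h'
  · rw [abs_of_nonneg (by linarith), abs_of_nonpos (by linarith), abs_of_nonpos (by linarith)]
    nlinarith [mul_nonneg (by linarith : (0:ℝ) ≤ 1 - 2*y) (by linarith : (0:ℝ) ≤ b + c - m),
      mul_nonneg h (by linarith : (0:ℝ) ≤ a + c - m)]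
  rcases le_total y 1 with h'' | h''
  · rw [abs_of_nonneg (by linarith), abs_of_nonneg (by linarith), abs_of_nonpos (by linarith)]
    nlinarith [mul_nonneg (by linarith : (0:ℝ) ≤ 2*y - 1) (by linarith : (0:ℝ) ≤ a + b - m),
      mul_nonneg (by linarith : (0:ℝ) ≤ 1 - y) (by linarith : (0:ℝ) ≤ a + c - m)]
  · rw [abs_of_nonneg (by linarith), abs_of_nonneg (by linarith), abs_of_nonneg (by linarith)]
    nlinarith [mul_nonneg ha (by linarith : (0:ℝ) ≤ y - 1),
      mul_nonneg hb (by linarith : (0:ℝ) ≤ y - 1),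
      mul_nonneg hc (by linarith : (0:ℝ) ≤ y - 1)]

lemma card_filter_val (n : ℕ) (p : ℕ → Prop) [DecidablePred p] :
    ((Finset.univ : Finset (Fin n)).filter (fun i => p i.val)).card
      = ((Finset.range n).filter p).card := by
  apply Finset.card_nbij (fun i => i.val)
  · intro i hi; simp only [Finset.mem_coe, Finset.mem_filter, Finset.mem_univ, true_and] at hi
    exact Finset.mem_filter.2 ⟨Finset.mem_range.2 i.isLt, hi⟩
  · intro i _ j _ hij; exact Fin.val_injective hij
  · intro j hj
    simp only [Finset.coe_filter, Finset.mem_range, Set.mem_setOf_eq] at hj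
    exact ⟨⟨j, hj.1⟩, by simp [hj.2], rfl⟩

lemma card_filter_val_eval (n : ℕ) (p : ℕ → Prop) [DecidablePred p] (l u : ℕ)
    (h : ∀ j, j < n → (p j ↔ (l ≤ j ∧ j < u))) (hu : u ≤ n) :
    ((Finset.univ : Finset (Fin n)).filter (fun i => p i.val)).card = u - l := by
  rw [card_filter_val, show (Finset.range n).filter p = Finset.Ico l u by
    ext j
    simp only [Finset.mem_filter, Finset.mem_range, Finset.mem_Ico]
    constructor
    · rintro ⟨h1, h2⟩; exact (h j h1).1 h2
    · rintro ⟨h1, h2⟩; have : j < n := lt_of_lt_of_le h2 hu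
      exact ⟨this, (h j this).2 ⟨h1, h2⟩⟩, Nat.card_Ico]

theorem stmt_13 (n z : ℕ) (hn : 3 ≤ n) (hz1 : 1 ≤ z) (hz2 : z ≤ (n - 1) / 2)
    (x : Fin n → ℝ)
    (hx : ∀ i : Fin n, x i =
      if i.val < z then 0 else if i.val < z + (n - 2 * z + 1) / 2 then 1/2 else 1) :
    OPTsc n z x (1/2) / OPTscStar n z x = ((n / 2 : ℕ) : ℝ) / (((n - 2 * z + 1) / 2 : ℕ) : ℝ) ∧
    (Even n →
      ((n / 2 : ℕ) : ℝ) / (((n - 2 * z + 1) / 2 : ℕ) : ℝ) = (n : ℝ) / ((n : ℝ) - 2 * z)) ∧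
    (Odd n →
      ((n / 2 : ℕ) : ℝ) / (((n - 2 * z + 1) / 2 : ℕ) : ℝ) =
        ((n : ℝ) - 1) / ((n : ℝ) - 2 * z + 1)) := by
  set m := (n - 2 * z + 1) / 2 with hm
  set k := n / 2 with hk
  have hzn : 2 * z + 1 ≤ n := by omega
  have hm1 : 1 ≤ m := by omega
  have hsum3 : z + m + k = n := by omega
  have hzk : z ≤ k := by omega
  have hmk : m ≤ k := by omega
  -- decomposition of the cost into three groups
  have decomp : ∀ (y : ℝ) (S : Finset (Fin n)),
      ∑ i ∈ S, |y - x i| =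
        ((S.filter (fun i => i.val < z)).card : ℝ) * |y - 0|
        + ((S.filter (fun i => ¬ i.val < z ∧ i.val < z + m)).card : ℝ) * |y - 1/2|
        + ((S.filter (fun i => ¬ i.val < z ∧ ¬ i.val < z + m)).card : ℝ) * |y - 1| := by
    intro y S
    have e1 : ∑ i ∈ S.filter (fun i => i.val < z), |y - x i|
        = ((S.filter (fun i => i.val < z)).card : ℝ) * |y - 0| := by
      rw [Finset.sum_congr rfl (fun i hi => by
        rw [hx i, if_pos (Finset.mem_filter.1 hi).2]), Finset.sum_const, nsmul_eq_mul]
    have e2 : ∑ i ∈ S.filter (fun i => ¬ i.val < z ∧ i.val < z + m), |y - x i|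
        = ((S.filter (fun i => ¬ i.val < z ∧ i.val < z + m)).card : ℝ) * |y - 1/2| := by
      rw [Finset.sum_congr rfl (fun i hi => by
        have h2 := (Finset.mem_filter.1 hi).2
        rw [hx i, if_neg h2.1, if_pos h2.2]), Finset.sum_const, nsmul_eq_mul]
    have e3 : ∑ i ∈ S.filter (fun i => ¬ i.val < z ∧ ¬ i.val < z + m), |y - x i|
        = ((S.filter (fun i => ¬ i.val < z ∧ ¬ i.val < z + m)).card : ℝ) * |y - 1| := by
      rw [Finset.sum_congr rfl (fun i hi => by
        have h2 := (Finset.mem_filter.1 hi).2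
        rw [hx i, if_neg h2.1, if_neg h2.2]), Finset.sum_const, nsmul_eq_mul]
    rw [← Finset.sum_filter_add_sum_filter_not S (fun i => i.val < z),
      ← Finset.sum_filter_add_sum_filter_not (S.filter (fun i => ¬ i.val < z))
        (fun i => i.val < z + m), Finset.filter_filter, Finset.filter_filter, e1, e2, e3]
    ring
  -- card bounds for arbitrary S
  have cardsBound : ∀ S : Finset (Fin n),
      (S.filter (fun i => i.val < z)).card ≤ z ∧
      (S.filter (fun i => ¬ i.val < z ∧ i.val < z + m)).card ≤ m ∧
      (S.filter (fun i => ¬ i.val < z ∧ ¬ i.val < z + m)).card ≤ k ∧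
      (S.filter (fun i => i.val < z)).card
        + (S.filter (fun i => ¬ i.val < z ∧ i.val < z + m)).card
        + (S.filter (fun i => ¬ i.val < z ∧ ¬ i.val < z + m)).card = S.card := by
    intro S
    refine ⟨?_, ?_, ?_, ?_⟩
    · calc (S.filter (fun i => i.val < z)).card
          ≤ ((Finset.univ : Finset (Fin n)).filter (fun i => i.val < z)).card :=
            Finset.card_le_card (Finset.filter_subset_filter _ (Finset.subset_univ S))
        _ = z := (card_filter_val_eval n (fun j => j < z) 0 z
            (fun j _ => by omega) (by omega)).trans (by omega)
    · calc (S.filter (fun i => ¬ i.val < z ∧ i.val < z + m)).card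
          ≤ ((Finset.univ : Finset (Fin n)).filter
              (fun i => ¬ i.val < z ∧ i.val < z + m)).card :=
            Finset.card_le_card (Finset.filter_subset_filter _ (Finset.subset_univ S))
        _ = m := (card_filter_val_eval n (fun j => ¬ j < z ∧ j < z + m) z (z + m)
            (fun j _ => by omega) (by omega)).trans (by omega)
    · calc (S.filter (fun i => ¬ i.val < z ∧ ¬ i.val < z + m)).card
          ≤ ((Finset.univ : Finset (Fin n)).filter
              (fun i => ¬ i.val < z ∧ ¬ i.val < z + m)).card :=
            Finset.card_le_card (Finset.filter_subset_filter _ (Finset.subset_univ S))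
        _ = k := (card_filter_val_eval n (fun j => ¬ j < z ∧ ¬ j < z + m) (z + m) n
            (fun j hj => by omega) (by omega)).trans (by omega)
    · have t1 := Finset.card_filter_add_card_filter_not
        (s := S) (p := fun i : Fin n => i.val < z)
      have t2 := Finset.card_filter_add_card_filter_not
        (s := S.filter (fun i : Fin n => ¬ i.val < z)) (p := fun i : Fin n => i.val < z + m)
      rw [Finset.filter_filter, Finset.filter_filter] at t2
      omega
  -- nonemptiness of cost set
  have hS1card : ((Finset.univ : Finset (Fin n)).filter
      (fun i => i.val < n - z)).card = n - z :=
    (card_filter_val_eval n (fun j => j < n - z) 0 (n - z)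
      (fun j _ => by omega) (by omega)).trans (by omega)
  have hS2card : ((Finset.univ : Finset (Fin n)).filter
      (fun i => ¬ i.val < z)).card = n - z :=
    (card_filter_val_eval n (fun j => ¬ j < z) z n
      (fun j hj => by omega) (by omega)).trans (by omega)
  have hne : ∀ y : ℝ, {c : ℝ | ∃ S : Finset (Fin n),
      S.card = n - z ∧ c = ∑ i ∈ S, |y - x i|}.Nonempty := by
    intro y
    exact ⟨_, ⟨_, hS1card, rfl⟩⟩
  have hbdd : ∀ y : ℝ, BddBelow {c : ℝ | ∃ S : Finset (Fin n),
      S.card = n - z ∧ c = ∑ i ∈ S, |y - x i|} := by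
    intro y
    refine ⟨0, ?_⟩
    rintro c ⟨S, -, rfl⟩
    exact Finset.sum_nonneg (fun i _ => abs_nonneg _)
  -- general lower bound
  have lb : ∀ (y : ℝ) (S : Finset (Fin n)), S.card = n - z →
      (m : ℝ) / 2 ≤ ∑ i ∈ S, |y - x i| := by
    intro y S hS
    rw [decomp]
    obtain ⟨hA, hB, hC, hABC⟩ := cardsBound S
    apply key_lb _ _ _ _ y (by positivity) (by positivity) (by positivity)
    · exact_mod_cast (by omega :
        m ≤ (S.filter (fun i => ¬ i.val < z ∧ i.val < z + m)).card
          + (S.filter (fun i => ¬ i.val < z ∧ ¬ i.val < z + m)).card)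
    · exact_mod_cast (by omega :
        m ≤ (S.filter (fun i => i.val < z)).card
          + (S.filter (fun i => ¬ i.val < z ∧ ¬ i.val < z + m)).card)
    · exact_mod_cast (by omega :
        m ≤ (S.filter (fun i => i.val < z)).card
          + (S.filter (fun i => ¬ i.val < z ∧ i.val < z + m)).card)
  -- value of OPTsc at 1/2
  have habs0 : |(1:ℝ)/2 - 0| = 1/2 := by norm_num
  have habsh : |(1:ℝ)/2 - 1/2| = 0 := by norm_num
  have habs1 : |(1:ℝ)/2 - 1| = 1/2 := by rw [abs_of_nonpos] <;> norm_num
  have hsum1 : ∑ i ∈ (Finset.univ : Finset (Fin n)).filter (fun i => i.val < n - z),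
      |1/2 - x i| = (k : ℝ) / 2 := by
    rw [decomp, Finset.filter_filter, Finset.filter_filter, Finset.filter_filter]
    rw [show ((Finset.univ : Finset (Fin n)).filter
        (fun i => i.val < n - z ∧ i.val < z)).card = z from
      (card_filter_val_eval n (fun j => j < n - z ∧ j < z) 0 z
        (fun j _ => by omega) (by omega)).trans (by omega)]
    rw [show ((Finset.univ : Finset (Fin n)).filter
        (fun i => i.val < n - z ∧ (¬ i.val < z ∧ i.val < z + m))).card = m from
      (card_filter_val_eval n (fun j => j < n - z ∧ (¬ j < z ∧ j < z + m)) z (z + m)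
        (fun j _ => by omega) (by omega)).trans (by omega)]
    rw [show ((Finset.univ : Finset (Fin n)).filter
        (fun i => i.val < n - z ∧ (¬ i.val < z ∧ ¬ i.val < z + m))).card = k - z from
      (card_filter_val_eval n (fun j => j < n - z ∧ (¬ j < z ∧ ¬ j < z + m)) (z + m) (n - z)
        (fun j _ => by omega) (by omega)).trans (by omega)]
    rw [habs0, habsh, habs1, Nat.cast_sub hzk]
    ring
  have h_half : OPTsc n z x (1/2) = (k : ℝ) / 2 := by
    unfold OPTsc
    apply le_antisymm
    · exact csInf_le (hbdd _) ⟨_, hS1card, hsum1.symm⟩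
    · refine le_csInf (hne _) ?_
      rintro c ⟨S, hS, rfl⟩
      rw [decomp]
      obtain ⟨hA, hB, hC, hABC⟩ := cardsBound S
      rw [habs0, habsh, habs1]
      have hac : (k : ℝ) ≤ ((S.filter (fun i => i.val < z)).card : ℝ)
          + ((S.filter (fun i => ¬ i.val < z ∧ ¬ i.val < z + m)).card : ℝ) := by
        exact_mod_cast (by omega :
          k ≤ (S.filter (fun i => i.val < z)).card
            + (S.filter (fun i => ¬ i.val < z ∧ ¬ i.val < z + m)).card)
      linarith
  -- value of OPTsc at 1
  have habs0' : |(1:ℝ) - 0| = 1 := by norm_num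
  have habsh' : |(1:ℝ) - 1/2| = 1/2 := by rw [abs_of_nonneg] <;> norm_num
  have habs1' : |(1:ℝ) - 1| = 0 := by norm_num
  have hsum2 : ∑ i ∈ (Finset.univ : Finset (Fin n)).filter (fun i => ¬ i.val < z),
      |1 - x i| = (m : ℝ) / 2 := by
    rw [decomp, Finset.filter_filter, Finset.filter_filter, Finset.filter_filter]
    rw [show ((Finset.univ : Finset (Fin n)).filter
        (fun i => ¬ i.val < z ∧ i.val < z)).card = 0 from
      (card_filter_val_eval n (fun j => ¬ j < z ∧ j < z) 0 0
        (fun j _ => by omega) (by omega)).trans (by omega)]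
    rw [show ((Finset.univ : Finset (Fin n)).filter
        (fun i => ¬ i.val < z ∧ (¬ i.val < z ∧ i.val < z + m))).card = m from
      (card_filter_val_eval n (fun j => ¬ j < z ∧ (¬ j < z ∧ j < z + m)) z (z + m)
        (fun j _ => by omega) (by omega)).trans (by omega)]
    rw [show ((Finset.univ : Finset (Fin n)).filter
        (fun i => ¬ i.val < z ∧ (¬ i.val < z ∧ ¬ i.val < z + m))).card = k from
      (card_filter_val_eval n (fun j => ¬ j < z ∧ (¬ j < z ∧ ¬ j < z + m)) (z + m) n
        (fun j hj => by omega) (by omega)).trans (by omega)]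
    rw [habs0', habsh', habs1']
    push_cast
    ring
  have h_one : OPTsc n z x 1 = (m : ℝ) / 2 := by
    unfold OPTsc
    apply le_antisymm
    · exact csInf_le (hbdd _) ⟨_, hS2card, hsum2.symm⟩
    · exact le_csInf (hne _) (by rintro c ⟨S, hS, rfl⟩; exact lb 1 S hS)
  -- value of OPTscStar
  have hrange_bdd : BddBelow (Set.range (OPTsc n z x)) := by
    refine ⟨0, ?_⟩
    rintro c ⟨y, rfl⟩
    refine le_csInf (hne y) ?_
    rintro c ⟨S, -, rfl⟩
    exact Finset.sum_nonneg (fun i _ => abs_nonneg _)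
  have h_star : OPTscStar n z x = (m : ℝ) / 2 := by
    unfold OPTscStar
    apply le_antisymm
    · exact h_one ▸ csInf_le hrange_bdd ⟨1, rfl⟩
    · refine le_csInf ⟨_, ⟨1, rfl⟩⟩ ?_
      rintro c ⟨y, rfl⟩
      unfold OPTsc
      refine le_csInf (hne y) ?_
      rintro c ⟨S, hS, rfl⟩
      exact lb y S hS
  have hm0 : (m : ℝ) ≠ 0 := Nat.cast_ne_zero.2 (by omega)
  refine ⟨?_, ?_, ?_⟩
  · rw [h_half, h_star]
    field_simp
  · rintro ⟨r, hr⟩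
    rw [show k = r by omega, show m = r - z by omega, Nat.cast_sub (by omega : z ≤ r), hr]
    have hzr : (z : ℝ) < r := by exact_mod_cast (by omega : z < r)
    rw [div_eq_div_iff (by linarith) (by push_cast; linarith)]
    push_cast
    ring
  · rintro ⟨r, hr⟩
    rw [show k = r by omega, show m = r + 1 - z by omega,
      Nat.cast_sub (by omega : z ≤ r + 1), hr]
    have hzr : (z : ℝ) ≤ r := by exact_mod_cast (by omega : z ≤ r)
    rw [div_eq_div_iff (by push_cast; linarith) (by push_cast; linarith)]
    push_cast
    ring
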